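/- Let ε ∈ (0,1), let X be uniform on {0,1}^n, and let Y be ε-correlated with X (each coordinate Y_i independently equals X_i with probability (1+ε)/2). Then for all f,g : {0,1}^n → ℝ≥0, E[f(X)g(Y)] ≤ |f|_{1+ε} · |g|_{1+ε}. -/

import Mathlib

open Finset Real

lemma aux_amgm {u r : ℝ} (hu0 : 0 < u) (hu1 : u < 1) (hr : r ≤ 0) :
    (2:ℝ) ≤ (1+u) ^ r + (1-u) ^ r := by
  have hA : (0:ℝ) < 1 + u := by linarith
  have hB : (0:ℝ) < 1 - u := by linarith
  have hAB : (1+u) * (1-u) ≤ 1 := by nlinarith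
  have h1 : (1:ℝ) ≤ ((1+u) * (1-u)) ^ r :=
    one_le_rpow_of_pos_of_le_one_of_nonpos (by positivity) hAB hr
  rw [mul_rpow hA.le hB.le] at h1
  have ha : ((1+u)^(r/2))^2 = (1+u)^r := by
    rw [← rpow_natCast ((1+u)^(r/2)) 2, ← rpow_mul hA.le]; norm_num
  have hb : ((1-u)^(r/2))^2 = (1-u)^r := by
    rw [← rpow_natCast ((1-u)^(r/2)) 2, ← rpow_mul hB.le]; norm_num
  have h2 : 1 ≤ ((1+u)^(r/2) * (1-u)^(r/2))^2 := by rw [mul_pow, ha, hb]; exact h1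
  have hpos : 0 < (1+u)^(r/2) * (1-u)^(r/2) :=
    mul_pos (rpow_pos_of_pos hA _) (rpow_pos_of_pos hB _)
  have hab : 1 ≤ (1+u)^(r/2) * (1-u)^(r/2) := by nlinarith
  nlinarith [sq_nonneg ((1+u)^(r/2) - (1-u)^(r/2))]

lemma aux_psi {p : ℝ} (hp1 : 1 < p) (hp2 : p < 2) {u : ℝ} (hu : u ∈ Set.Icc (0:ℝ) 1) :
    2*(p-1)*u ≤ (1+u)^(p-1) - (1-u)^(p-1) := by
  set ψ : ℝ → ℝ := fun u => (1+u)^(p-1) - (1-u)^(p-1) - 2*(p-1)*u with hψdef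
  have hc : ContinuousOn ψ (Set.Icc 0 1) := by
    apply ContinuousOn.sub
    apply ContinuousOn.sub
    · exact ((continuous_const.add continuous_id).continuousOn).rpow_const
        (fun x _ => Or.inr (by linarith))
    · exact ((continuous_const.sub continuous_id).continuousOn).rpow_const
        (fun x _ => Or.inr (by linarith))
    · exact (continuous_const.mul continuous_id).continuousOn
  have hd : ∀ x ∈ Set.Ioo (0:ℝ) 1, HasDerivAt ψ
      ((p-1)*((1+x)^(p-2) + (1-x)^(p-2) - 2)) x := by
    intro x hx
    have hA : (0:ℝ) < 1 + x := by linarith [hx.1]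
    have hB : (0:ℝ) < 1 - x := by linarith [hx.2]
    have h1 : HasDerivAt (fun u : ℝ => (1+u)^(p-1)) (1 * (p-1) * (1+x)^(p-1-1)) x :=
      ((hasDerivAt_id x).const_add 1).rpow_const (Or.inl hA.ne')
    have h2 : HasDerivAt (fun u : ℝ => (1-u)^(p-1)) ((-1) * (p-1) * (1-x)^(p-1-1)) x :=
      (((hasDerivAt_id x).neg).const_add 1).rpow_const (Or.inl hB.ne')
    have h3 : HasDerivAt (fun u : ℝ => 2*(p-1)*u) (2*(p-1)) x := by
      simpa using (hasDerivAt_id x).const_mul (2*(p-1))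
    have := (h1.sub h2).sub h3
    refine this.congr_deriv ?_
    have e : p - 1 - 1 = p - 2 := by ring
    rw [e]; ring
  have hmono : MonotoneOn ψ (Set.Icc 0 1) := by
    apply monotoneOn_of_deriv_nonneg (convex_Icc 0 1) hc
    · rw [interior_Icc]
      exact fun x hx => (hd x hx).differentiableAt.differentiableWithinAt
    · rw [interior_Icc]
      intro x hx
      rw [(hd x hx).deriv]
      have := aux_amgm hx.1 hx.2 (show p - 2 ≤ 0 by linarith)
      nlinarith
  have h0 : ψ 0 = 0 := by simp [hψdef]
  have := hmono (Set.left_mem_Icc.mpr zero_le_one) hu hu.1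
  rw [h0] at this
  simp only [hψdef] at this
  linarith

lemma aux_phi {p : ℝ} (hp1 : 1 < p) (hp2 : p < 2) {u : ℝ} (hu : u ∈ Set.Icc (0:ℝ) 1) :
    2 + p*(p-1)*u^2 ≤ (1+u)^p + (1-u)^p := by
  set φ : ℝ → ℝ := fun u => (1+u)^p + (1-u)^p - p*(p-1)*u^2 with hφdef
  have hc : ContinuousOn φ (Set.Icc 0 1) := by
    apply ContinuousOn.sub
    apply ContinuousOn.add
    · exact ((continuous_const.add continuous_id).continuousOn).rpow_const
        (fun x _ => Or.inr (by linarith))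
    · exact ((continuous_const.sub continuous_id).continuousOn).rpow_const
        (fun x _ => Or.inr (by linarith))
    · exact (continuous_const.mul (continuous_pow 2)).continuousOn
  have hd : ∀ x ∈ Set.Ioo (0:ℝ) 1, HasDerivAt φ
      (p*((1+x)^(p-1) - (1-x)^(p-1) - 2*(p-1)*x)) x := by
    intro x hx
    have hA : (0:ℝ) < 1 + x := by linarith [hx.1]
    have hB : (0:ℝ) < 1 - x := by linarith [hx.2]
    have h1 : HasDerivAt (fun u : ℝ => (1+u)^p) (1 * p * (1+x)^(p-1)) x :=
      ((hasDerivAt_id x).const_add 1).rpow_const (Or.inl hA.ne')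
    have h2 : HasDerivAt (fun u : ℝ => (1-u)^p) ((-1) * p * (1-x)^(p-1)) x :=
      (((hasDerivAt_id x).neg).const_add 1).rpow_const (Or.inl hB.ne')
    have h3 : HasDerivAt (fun u : ℝ => p*(p-1)*u^2) (p*(p-1)*(2*x)) x := by
      simpa using ((hasDerivAt_pow 2 x).const_mul (p*(p-1)))
    have := (h1.add h2).sub h3
    refine this.congr_deriv ?_
    ring
  have hmono : MonotoneOn φ (Set.Icc 0 1) := by
    apply monotoneOn_of_deriv_nonneg (convex_Icc 0 1) hc
    · rw [interior_Icc]
      exact fun x hx => (hd x hx).differentiableAt.differentiableWithinAt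
    · rw [interior_Icc]
      intro x hx
      rw [(hd x hx).deriv]
      have := aux_psi hp1 hp2 (Set.mem_Icc_of_Ioo hx)
      nlinarith
  have h0 : φ 0 = 2 := by norm_num [hφdef]
  have := hmono (Set.left_mem_Icc.mpr zero_le_one) hu hu.1
  rw [h0] at this
  simp only [hφdef] at this
  linarith

lemma aux_two_point_aux {ε a b : ℝ} (hε0 : 0 < ε) (hε1 : ε < 1)
    (ha : 0 ≤ a) (hb : 0 ≤ b) (hab : b ≤ a) :
    (a+b)^2 + ε*(a-b)^2 ≤ 4 * ((a^(1+ε) + b^(1+ε))/2)^(2/(1+ε)) := by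
  set p := 1 + ε with hp
  have hp1 : 1 < p := by linarith
  have hp2 : p < 2 := by linarith
  have hp0 : (0:ℝ) < p := by linarith
  rcases eq_or_lt_of_le (by linarith : (0:ℝ) ≤ a + b) with h0 | hs
  · have ha0 : a = 0 := by linarith
    have hb0 : b = 0 := by linarith
    rw [ha0, hb0]
    rw [zero_rpow hp0.ne']
    norm_num
    positivity
  · set s := a + b with hs'
    have hs2 : (0:ℝ) < s/2 := by linarith
    set u := (a - b) / s with hu'
    have hu0 : 0 ≤ u := div_nonneg (by linarith) hs.le
    have hu1 : u ≤ 1 := by rw [div_le_one hs]; linarith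
    have hua : a = s/2 * (1+u) := by rw [hu']; field_simp; linarith
    have hub : b = s/2 * (1-u) := by rw [hu']; field_simp; linarith
    have key1 : a^p + b^p = (s/2)^p * ((1+u)^p + (1-u)^p) := by
      rw [hua, hub, mul_rpow hs2.le (by linarith), mul_rpow hs2.le (by linarith)]
      ring
    have key2 : (2:ℝ) * (1 + ε*u^2)^(p/2) ≤ (1+u)^p + (1-u)^p := by
      have hbern : (1 + ε*u^2)^(p/2) ≤ 1 + (p/2)*(ε*u^2) :=
        rpow_one_add_le_one_add_mul_self (by nlinarith [sq_nonneg u]) (by positivity) (by linarith)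
      have hphi := aux_phi hp1 hp2 (Set.mem_Icc.mpr ⟨hu0, hu1⟩)
      calc (2:ℝ) * (1 + ε*u^2)^(p/2) ≤ 2*(1 + p/2*(ε*u^2)) := by linarith
        _ = 2 + p*(p-1)*u^2 := by rw [hp]; ring
        _ ≤ (1+u)^p + (1-u)^p := hphi
    have key3 : (s/2)^p * (2 * (1 + ε*u^2)^(p/2)) ≤ a^p + b^p := by
      rw [key1]
      exact mul_le_mul_of_nonneg_left key2 (rpow_nonneg hs2.le p)
    -- divide by 2 and raise to 2/p
    have key4 : (s/2)^p * (1 + ε*u^2)^(p/2) ≤ (a^p + b^p)/2 := by linarith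
    have hLnn : (0:ℝ) ≤ (s/2)^p * (1 + ε*u^2)^(p/2) := by positivity
    have key5 := rpow_le_rpow hLnn key4 (by positivity : (0:ℝ) ≤ 2/p)
    have keyL : ((s/2)^p * (1 + ε*u^2)^(p/2))^(2/p) = (s/2)^2 * (1 + ε*u^2) := by
      rw [mul_rpow (by positivity) (by positivity), ← rpow_natCast (s/2) 2,
        ← rpow_mul hs2.le, ← rpow_mul (by positivity)]
      rw [show p * (2/p) = (2:ℝ) by field_simp, show p/2 * (2/p) = (1:ℝ) by field_simp]
      norm_num
    rw [keyL] at key5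
    have hsu : s * u = a - b := by rw [hu']; field_simp
    calc (a+b)^2 + ε*(a-b)^2 = 4 * ((s/2)^2 * (1 + ε*u^2)) := by
          rw [← hsu, hs']; ring
      _ ≤ 4 * ((a^p + b^p)/2)^(2/p) := by linarith

lemma aux_two_point {ε a b : ℝ} (hε0 : 0 < ε) (hε1 : ε < 1) (ha : 0 ≤ a) (hb : 0 ≤ b) :
    (a+b)^2 + ε*(a-b)^2 ≤ 4 * ((a^(1+ε) + b^(1+ε))/2)^(2/(1+ε)) := by
  rcases le_total b a with h | h
  · exact aux_two_point_aux hε0 hε1 ha hb h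
  · have := aux_two_point_aux hε0 hε1 hb ha h
    calc (a+b)^2 + ε*(a-b)^2 = (b+a)^2 + ε*(b-a)^2 := by ring
      _ ≤ 4 * ((b^(1+ε) + a^(1+ε))/2)^(2/(1+ε)) := this
      _ = 4 * ((a^(1+ε) + b^(1+ε))/2)^(2/(1+ε)) := by ring_nf

lemma aux_base {ε a b c d : ℝ} (hε0 : 0 < ε) (hε1 : ε < 1)
    (ha : 0 ≤ a) (hb : 0 ≤ b) (hc : 0 ≤ c) (hd : 0 ≤ d) :
    ((a+b)*(c+d) + ε*(a-b)*(c-d))/4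
      ≤ ((a^(1+ε) + b^(1+ε))/2)^((1+ε)⁻¹) * ((c^(1+ε) + d^(1+ε))/2)^((1+ε)⁻¹) := by
  have hp0 : (0:ℝ) < 1 + ε := by linarith
  set M := ((a^(1+ε) + b^(1+ε))/2)^((1+ε)⁻¹) with hM
  set N := ((c^(1+ε) + d^(1+ε))/2)^((1+ε)⁻¹) with hN
  have hMnn : 0 ≤ M := rpow_nonneg (by positivity) _
  have hNnn : 0 ≤ N := rpow_nonneg (by positivity) _
  have hXnn : (0:ℝ) ≤ (a^(1+ε) + b^(1+ε))/2 := by positivity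
  have hYnn : (0:ℝ) ≤ (c^(1+ε) + d^(1+ε))/2 := by positivity
  have hM2 : (a+b)^2 + ε*(a-b)^2 ≤ 4 * M^2 := by
    have h := aux_two_point hε0 hε1 ha hb
    have e : ((a^(1+ε) + b^(1+ε))/2)^(2/(1+ε)) = M^2 := by
      rw [hM, ← rpow_natCast (((a^(1+ε) + b^(1+ε))/2)^((1+ε)⁻¹)) 2, ← rpow_mul hXnn]
      norm_num
      congr 1
      ring
    linarith
  have hN2 : (c+d)^2 + ε*(c-d)^2 ≤ 4 * N^2 := by
    have h := aux_two_point hε0 hε1 hc hd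
    have e : ((c^(1+ε) + d^(1+ε))/2)^(2/(1+ε)) = N^2 := by
      rw [hN, ← rpow_natCast (((c^(1+ε) + d^(1+ε))/2)^((1+ε)⁻¹)) 2, ← rpow_mul hYnn]
      norm_num
      congr 1
      ring
    linarith
  have cauchy : ((a+b)*(c+d) + ε*(a-b)*(c-d))^2
      ≤ ((a+b)^2 + ε*(a-b)^2) * ((c+d)^2 + ε*(c-d)^2) := by
    nlinarith [sq_nonneg ((a+b)*(c-d) - (a-b)*(c+d)), hε0.le, sq_nonneg ((a-b)*(c-d))]
  have hsq : ((a+b)*(c+d) + ε*(a-b)*(c-d))^2 ≤ (4*(M*N))^2 := by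
    calc ((a+b)*(c+d) + ε*(a-b)*(c-d))^2
        ≤ ((a+b)^2 + ε*(a-b)^2) * ((c+d)^2 + ε*(c-d)^2) := cauchy
      _ ≤ (4*M^2) * (4*N^2) := by
          apply mul_le_mul hM2 hN2 (by positivity) (by positivity)
      _ = (4*(M*N))^2 := by ring
  have h4 : (0:ℝ) ≤ 4*(M*N) := by positivity
  nlinarith [hsq, h4]

lemma hc_sum_succ {n : ℕ} (h : (Fin (n+1) → Bool) → ℝ) :
    ∑ x : Fin (n+1) → Bool, h x = ∑ b : Bool, ∑ x : Fin n → Bool, h (Fin.cons b x) := by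
  rw [← (Fin.consEquiv (fun _ : Fin (n+1) => Bool)).sum_comp h, Fintype.sum_prod_type]
  rfl

noncomputable def hcS (ε : ℝ) (n : ℕ) (u v : (Fin n → Bool) → ℝ) : ℝ :=
  ∑ x : Fin n → Bool, ∑ y : Fin n → Bool,
    ((2:ℝ)^n)⁻¹ * (∏ i, if x i = y i then (1+ε)/2 else (1-ε)/2) * u x * v y

lemma hcS_succ (ε : ℝ) (n : ℕ) (u v : (Fin (n+1) → Bool) → ℝ) :
    hcS ε (n+1) u v = ∑ b : Bool, ∑ b' : Bool,
      (2:ℝ)⁻¹ * (if b = b' then (1+ε)/2 else (1-ε)/2) *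
        hcS ε n (fun x => u (Fin.cons b x)) (fun y => v (Fin.cons b' y)) := by
  unfold hcS
  rw [hc_sum_succ]
  refine Finset.sum_congr rfl fun b _ => ?_
  rw [Finset.sum_congr rfl fun x (_ : x ∈ Finset.univ) => hc_sum_succ
    (fun y => ((2:ℝ)^(n+1))⁻¹ * (∏ i, if Fin.cons b x i = y i then (1+ε)/2 else (1-ε)/2)
        * u (Fin.cons b x) * v y)]
  rw [Finset.sum_comm]
  refine Finset.sum_congr rfl fun b' _ => ?_
  rw [Finset.mul_sum]
  refine Finset.sum_congr rfl fun x _ => ?_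
  rw [Finset.mul_sum]
  refine Finset.sum_congr rfl fun y _ => ?_
  rw [Fin.prod_univ_succ]
  simp only [Fin.cons_zero, Fin.cons_succ]
  rw [pow_succ, mul_inv]
  ring

noncomputable def hcN (ε : ℝ) (n : ℕ) (u : (Fin n → Bool) → ℝ) : ℝ :=
  (((2:ℝ)^n)⁻¹ * ∑ x : Fin n → Bool, u x ^ (1+ε)) ^ ((1+ε)⁻¹)

lemma hcN_nonneg (ε : ℝ) (n : ℕ) (u : (Fin n → Bool) → ℝ) (hu : ∀ x, 0 ≤ u x) :
    0 ≤ hcN ε n u :=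
  rpow_nonneg (mul_nonneg (by positivity)
    (Finset.sum_nonneg fun x _ => rpow_nonneg (hu x) _)) _

lemma hcN_succ {ε : ℝ} (hε0 : 0 < ε) (n : ℕ) (u : (Fin (n+1) → Bool) → ℝ)
    (hu : ∀ x, 0 ≤ u x) :
    ((hcN ε n (fun x => u (Fin.cons true x)) ^ (1+ε)
      + hcN ε n (fun x => u (Fin.cons false x)) ^ (1+ε))/2) ^ ((1+ε)⁻¹)
    = hcN ε (n+1) u := by
  have hpne : (1+ε) ≠ 0 := by positivity
  have h1 : (0:ℝ) ≤ ((2:ℝ)^n)⁻¹ * ∑ x : Fin n → Bool, u (Fin.cons true x) ^ (1+ε) := by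
    apply mul_nonneg (by positivity)
    exact Finset.sum_nonneg fun x _ => rpow_nonneg (hu _) _
  have h2 : (0:ℝ) ≤ ((2:ℝ)^n)⁻¹ * ∑ x : Fin n → Bool, u (Fin.cons false x) ^ (1+ε) := by
    apply mul_nonneg (by positivity)
    exact Finset.sum_nonneg fun x _ => rpow_nonneg (hu _) _
  unfold hcN
  rw [rpow_inv_rpow h1 hpne, rpow_inv_rpow h2 hpne]
  congr 1
  rw [hc_sum_succ (fun x => u x ^ (1+ε)), Fintype.sum_bool, pow_succ, mul_inv]
  ring

lemma hc_main (ε : ℝ) (hε0 : 0 < ε) (hε1 : ε < 1) :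
    ∀ n (u v : (Fin n → Bool) → ℝ), (∀ x, 0 ≤ u x) → (∀ x, 0 ≤ v x) →
      hcS ε n u v ≤ hcN ε n u * hcN ε n v := by
  have hpne : (1+ε) ≠ 0 := by positivity
  intro n
  induction n with
  | zero =>
    intro u v hu hv
    unfold hcS hcN
    simp only [pow_zero, inv_one, one_mul]
    rw [Finset.univ_unique, Finset.sum_singleton, Finset.sum_singleton, Finset.sum_singleton,
      Finset.sum_singleton]
    simp only [Finset.univ_eq_empty, Finset.prod_empty, one_mul]
    rw [rpow_rpow_inv (hu _) hpne, rpow_rpow_inv (hv _) hpne]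
  | succ n ih =>
    intro u v hu hv
    rw [hcS_succ]
    have hwε : ∀ b b' : Bool, (0:ℝ) ≤ (if b = b' then (1+ε)/2 else (1-ε)/2) := by
      intro b b'; split_ifs <;> linarith
    have hw : ∀ b b' : Bool, (0:ℝ) ≤ (2:ℝ)⁻¹ * (if b = b' then (1+ε)/2 else (1-ε)/2) :=
      fun b b' => mul_nonneg (by norm_num) (hwε b b')
    have step1 : ∑ b : Bool, ∑ b' : Bool,
        (2:ℝ)⁻¹ * (if b = b' then (1+ε)/2 else (1-ε)/2) *
          hcS ε n (fun x => u (Fin.cons b x)) (fun y => v (Fin.cons b' y))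
        ≤ ∑ b : Bool, ∑ b' : Bool,
        (2:ℝ)⁻¹ * (if b = b' then (1+ε)/2 else (1-ε)/2) *
          (hcN ε n (fun x => u (Fin.cons b x)) * hcN ε n (fun y => v (Fin.cons b' y))) := by
      apply Finset.sum_le_sum
      intro b _
      apply Finset.sum_le_sum
      intro b' _
      exact mul_le_mul_of_nonneg_left
        (ih _ _ (fun x => hu _) (fun x => hv _)) (hw b b')
    refine step1.trans ?_
    have hAnn := hcN_nonneg ε n (fun x => u (Fin.cons true x)) (fun x => hu _)
    have hBnn := hcN_nonneg ε n (fun x => u (Fin.cons false x)) (fun x => hu _)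
    have hCnn := hcN_nonneg ε n (fun y => v (Fin.cons true y)) (fun y => hv _)
    have hDnn := hcN_nonneg ε n (fun y => v (Fin.cons false y)) (fun y => hv _)
    have expand : ∑ b : Bool, ∑ b' : Bool,
        (2:ℝ)⁻¹ * (if b = b' then (1+ε)/2 else (1-ε)/2) *
          (hcN ε n (fun x => u (Fin.cons b x)) * hcN ε n (fun y => v (Fin.cons b' y)))
        = ((hcN ε n (fun x => u (Fin.cons true x)) + hcN ε n (fun x => u (Fin.cons false x)))
            * (hcN ε n (fun y => v (Fin.cons true y)) + hcN ε n (fun y => v (Fin.cons false y)))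
          + ε * (hcN ε n (fun x => u (Fin.cons true x)) - hcN ε n (fun x => u (Fin.cons false x)))
            * (hcN ε n (fun y => v (Fin.cons true y)) - hcN ε n (fun y => v (Fin.cons false y))))/4 := by
      rw [Fintype.sum_bool, Fintype.sum_bool, Fintype.sum_bool]
      norm_num
      ring
    rw [expand, ← hcN_succ hε0 n u hu, ← hcN_succ hε0 n v hv]
    exact aux_base hε0 hε1 hAnn hBnn hCnn hDnn

/-- Two-function hypercontractivity: for an ε-correlated pair `(X,Y)` on the cube,
`E[f(X)g(Y)] ≤ |f|_{1+ε} |g|_{1+ε}`. -/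
theorem two_function_hypercontractivity (n : ℕ) (ε : ℝ) (hε : ε ∈ Set.Ioo (0:ℝ) 1)
    (f g : (Fin n → Bool) → ℝ) (hf : ∀ x, 0 ≤ f x) (hg : ∀ x, 0 ≤ g x) :
    ∑ x : Fin n → Bool, ∑ y : Fin n → Bool,
        ((2:ℝ)^n)⁻¹ * (∏ i, if x i = y i then (1+ε)/2 else (1-ε)/2) * f x * g y
      ≤ (((2:ℝ)^n)⁻¹ * ∑ x : Fin n → Bool, f x ^ (1+ε)) ^ ((1+ε)⁻¹)
        * (((2:ℝ)^n)⁻¹ * ∑ y : Fin n → Bool, g y ^ (1+ε)) ^ ((1+ε)⁻¹) := by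
  exact hc_main ε hε.1 hε.2 n f g hf hg
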